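/- Let γ_1, …, γ_r, ν_1, …, ν_s ∈ ℝ^n. Suppose: (i) there exists b ∈ ℝ^n with b_i > 0 for all i, ⟨γ_i, b⟩ = 0 for all i = 1,…,r and ⟨ν_j, b⟩ = 0 for all j = 1,…,s (a positive linear conservation law); and (ii) the convex hull of {ν_1,…,ν_s} has empty intersection with the linear span of {γ_1,…,γ_r}. Then there exists δ ∈ ℝ^n with δ_i ≥ 0 for all i, ⟨γ_i, δ⟩ = 0 for all i = 1,…,r, and ⟨ν_j, δ⟩ < 0 for all j = 1,…,s. -/

import Mathlib

/-- Existence of nonnegative exponents `δ` for the multiscale degeneration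
of equilibria: under a positive conservation law and the structural condition
(convex hull of irreversible stoichiometric vectors misses the span of the
reversible ones) there is `δ ≥ 0` with `⟨γ_i, δ⟩ = 0` and `⟨ν_j, δ⟩ < 0`. -/
theorem exists_nonneg_exponents
    (n r s : ℕ) (γ : Fin r → Fin n → ℝ) (ν : Fin s → Fin n → ℝ)
    (hcons : ∃ b : Fin n → ℝ, (∀ i, 0 < b i) ∧
      (∀ i, ∑ t, γ i t * b t = 0) ∧ (∀ j, ∑ t, ν j t * b t = 0))
    (hstruct : convexHull ℝ (Set.range ν) ∩
      (Submodule.span ℝ (Set.range γ) : Set (Fin n → ℝ)) = ∅) :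
    ∃ δ : Fin n → ℝ, (∀ i, 0 ≤ δ i) ∧
      (∀ i, ∑ t, γ i t * δ t = 0) ∧ (∀ j, ∑ t, ν j t * δ t < 0) := by
  obtain ⟨b, hbpos, hγb, hνb⟩ := hcons
  set S : Submodule ℝ (Fin n → ℝ) := Submodule.span ℝ (Set.range γ)
  -- strict separation
  have hdisj : Disjoint (convexHull ℝ (Set.range ν)) (S : Set (Fin n → ℝ)) :=
    Set.disjoint_iff_inter_eq_empty.mpr hstruct
  have hcompact : IsCompact (convexHull ℝ (Set.range ν)) :=
    (Set.finite_range ν).isCompact_convexHull ℝ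
  obtain ⟨f, u, v, hfu, huv, hfv⟩ :=
    geometric_hahn_banach_compact_closed (convex_convexHull ℝ _) hcompact
      (S.convex) (Submodule.closed_of_finiteDimensional S) hdisj
  -- f vanishes on S
  have hspan0 : ∀ x ∈ S, f x = 0 := by
    intro x hx
    by_contra h
    have hmem : ((v - 1) / f x) • x ∈ S := S.smul_mem _ hx
    have hv := hfv _ hmem
    rw [map_smul, smul_eq_mul, div_mul_cancel₀ _ h] at hv
    linarith
  have hv0 : v < 0 := by
    have := hfv 0 S.zero_mem
    simpa using this
  -- representation of f as a sum
  set δ₀ : Fin n → ℝ := fun t => f (Pi.single t 1) with hδ₀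
  have hrep : ∀ x : Fin n → ℝ, f x = ∑ t, x t * δ₀ t := by
    intro x
    conv_lhs => rw [← Finset.univ_sum_single x]
    rw [map_sum]
    refine Finset.sum_congr rfl fun t _ => ?_
    have hsingle : Pi.single t (x t) = x t • (Pi.single t 1 : Fin n → ℝ) := by
      ext u
      by_cases h : u = t <;> simp [Pi.single_apply, h]
    rw [hsingle, map_smul, smul_eq_mul]
  have hγδ₀ : ∀ i, ∑ t, γ i t * δ₀ t = 0 := by
    intro i
    rw [← hrep]
    exact hspan0 _ (Submodule.subset_span ⟨i, rfl⟩)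
  have hνδ₀ : ∀ j, ∑ t, ν j t * δ₀ t < 0 := by
    intro j
    rw [← hrep]
    have := hfu (ν j) (subset_convexHull ℝ _ ⟨j, rfl⟩)
    linarith
  -- choose a large multiple of b
  obtain ⟨M, hM⟩ := Finite.exists_le (fun t : Fin n => -δ₀ t / b t)
  set M' : ℝ := max M 0 with hM'
  refine ⟨fun t => δ₀ t + M' * b t, ?_, ?_, ?_⟩
  · intro t
    have h1 : -δ₀ t / b t ≤ M' := le_trans (hM t) (le_max_left _ _)
    have h2 : (-δ₀ t / b t) * b t ≤ M' * b t :=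
      mul_le_mul_of_nonneg_right h1 (hbpos t).le
    rw [div_mul_cancel₀ _ (hbpos t).ne'] at h2
    dsimp only
    linarith
  · intro i
    have : ∑ t, γ i t * (δ₀ t + M' * b t) =
        (∑ t, γ i t * δ₀ t) + M' * ∑ t, γ i t * b t := by
      rw [Finset.mul_sum, ← Finset.sum_add_distrib]
      refine Finset.sum_congr rfl fun t _ => by ring
    rw [this, hγδ₀ i, hγb i]; ring
  · intro j
    have : ∑ t, ν j t * (δ₀ t + M' * b t) =
        (∑ t, ν j t * δ₀ t) + M' * ∑ t, ν j t * b t := by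
      rw [Finset.mul_sum, ← Finset.sum_add_distrib]
      refine Finset.sum_congr rfl fun t _ => by ring
    rw [this, hνb j]
    simpa using hνδ₀ j
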